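/- Let ζ and ζ̃ be random variables such that the law of ζ̃ has density f with respect to the law of ζ, and let Ξ = F(ζ₁,…,ζ_N) and Ξ̃ = F(ζ̃₁,…,ζ̃_N) be functions of N i.i.d. copies. If E[f(ζ)^{1−l}] ≤ 1 + C/N for some l ∈ ℕ, l ≥ 2, then E[|Ξ|^{l−1}] ≤ e^{C/l} · E[|Ξ̃|^l]^{(l−1)/l}. -/

import Mathlib

open MeasureTheory ENNReal

lemma lintegral_pi_prod_aux {E : Type*} [MeasurableSpace E] (ν : Measure E) [SigmaFinite ν] :
    ∀ (n : ℕ) (h : Fin n → E → ENNReal), (∀ i, Measurable (h i)) →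
      ∫⁻ x, ∏ i, h i (x i) ∂(Measure.pi fun _ : Fin n => ν) = ∏ i, ∫⁻ y, h i y ∂ν := by
  intro n
  induction n with
  | zero => intro h _; simp [Measure.pi_of_empty]
  | succ n ih =>
    intro h hh
    have hmp := measurePreserving_piFinSuccAbove (fun _ : Fin (n + 1) => ν) 0
    have key : ∫⁻ x, ∏ i, h i (x i) ∂(Measure.pi fun _ : Fin (n + 1) => ν)
        = ∫⁻ y : E × (Fin n → E),
            ∏ i, h i (((MeasurableEquiv.piFinSuccAbove (fun _ : Fin (n + 1) => E) 0).symm y) i)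
          ∂(ν.prod (Measure.pi fun _ : Fin n => ν)) := by
      rw [← hmp.map_eq, lintegral_map_equiv]
      simp only [MeasurableEquiv.symm_apply_apply]
    rw [key]
    have hcons : ∀ y : E × (Fin n → E),
        ∏ i, h i (((MeasurableEquiv.piFinSuccAbove (fun _ : Fin (n + 1) => E) 0).symm y) i)
          = h 0 y.1 * ∏ j : Fin n, h j.succ (y.2 j) := by
      intro y
      simp_rw [MeasurableEquiv.piFinSuccAbove_symm_apply, Fin.insertNthEquiv, Equiv.coe_fn_mk,
        Fin.insertNth_zero]
      rw [Fin.prod_univ_succ]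
      simp [Fin.cons_zero, Fin.cons_succ]
    simp_rw [hcons]
    rw [lintegral_prod_mul (f := h 0) (g := fun w : Fin n → E => ∏ j : Fin n, h j.succ (w j))
      (hh 0).aemeasurable
      ((Finset.measurable_prod Finset.univ fun j _ =>
        (hh j.succ).comp (measurable_pi_apply j)).aemeasurable)]
    rw [ih (fun j => h j.succ) (fun j => hh j.succ), Fin.prod_univ_succ]

lemma prod_rpow_of_ne_zero_aux {ι : Type*} (s : Finset ι) (b : ι → ENNReal)
    (hb : ∀ i ∈ s, b i ≠ 0) (r : ℝ) :
    (∏ i ∈ s, b i) ^ r = ∏ i ∈ s, b i ^ r := by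
  classical
  induction s using Finset.induction with
  | empty => simp
  | insert a s' hi ih =>
    rw [Finset.prod_insert hi, Finset.prod_insert hi,
      ENNReal.mul_rpow_of_ne_zero (hb _ (Finset.mem_insert_self _ _))
        (Finset.prod_ne_zero_iff.2 fun i hi' => hb _ (Finset.mem_insert_of_mem hi')),
      ih fun i hi' => hb _ (Finset.mem_insert_of_mem hi')]

/-- Change-of-measure/Hölder step: let the law of `ζ̃` have density `f` with respect to the
law `ν` of `ζ`, and let `Ξ = F(ζ₁,…,ζ_N)`, `Ξ̃ = F(ζ̃₁,…,ζ̃_N)` for `N` i.i.d. copies.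
If `E[f(ζ)^{1−l}] ≤ 1 + C/N` for some integer `l ≥ 2`, then
`E[|Ξ|^{l−1}] ≤ e^{C/l} · E[|Ξ̃|^l]^{(l−1)/l}`. -/
theorem change_of_measure_holder {E : Type*} [MeasurableSpace E] (ν : Measure E)
    [IsProbabilityMeasure ν] (f : E → ENNReal) (hf : Measurable f)
    (hprob : IsProbabilityMeasure (ν.withDensity f))
    (N : ℕ) (hN : 1 ≤ N) (F : (Fin N → E) → ℝ) (hF : Measurable F)
    (l : ℕ) (hl : 2 ≤ l) (C : ℝ) (hC : 0 ≤ C)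
    (hmom : ∫⁻ x, f x ^ ((1 : ℝ) - l) ∂ν ≤ ENNReal.ofReal (1 + C / N)) :
    ∫⁻ x, ENNReal.ofReal (|F x| ^ ((l : ℝ) - 1)) ∂(Measure.pi fun _ : Fin N => ν)
      ≤ ENNReal.ofReal (Real.exp (C / l)) *
        (∫⁻ x, ENNReal.ofReal (|F x| ^ (l : ℝ))
            ∂(Measure.pi fun _ : Fin N => ν.withDensity f)) ^ (((l : ℝ) - 1) / l) := by
  have hl1 : (1 : ℝ) < l := by exact_mod_cast (by omega : 1 < l)
  have hl0 : (0 : ℝ) < l := by linarith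
  have hlm1 : (0 : ℝ) < (l : ℝ) - 1 := by linarith
  have hNpos : (0 : ℝ) < N := by exact_mod_cast Nat.lt_of_lt_of_le Nat.zero_lt_one hN
  set π : Measure (Fin N → E) := Measure.pi fun _ : Fin N => ν with hπdef
  set p : ℝ := (l : ℝ) / ((l : ℝ) - 1) with hpdef
  have hppos : 0 < p := div_pos hl0 hlm1
  have hpq : Real.HolderConjugate p (l : ℝ) := by
    exact ((Real.holderConjugate_iff_eq_conjExponent hl1).2 hpdef).symm
  set a : ℝ := ((l : ℝ) - 1) / l with hadef
  set g : (Fin N → E) → ℝ≥0∞ := fun x => ∏ i, f (x i) with hgdef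
  have hgmeas : Measurable g :=
    Finset.measurable_prod Finset.univ fun i _ => hf.comp (measurable_pi_apply i)
  -- f is a.e. finite and nonzero
  have hf_lt_top : ∀ᵐ y ∂ν, f y < ∞ := by
    refine ae_lt_top hf ?_
    have h1 : (ν.withDensity f) Set.univ = 1 := measure_univ
    rw [withDensity_apply f MeasurableSet.univ, setLIntegral_univ] at h1
    rw [h1]; exact one_ne_top
  have hf_ne_zero : ∀ᵐ y ∂ν, f y ≠ 0 := by
    rw [ae_iff]
    simp only [not_not]
    by_contra hzero
    have hsm : MeasurableSet {y | f y = 0} := hf (measurableSet_singleton 0)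
    have h1 : ∫⁻ y in {y | f y = 0}, f y ^ ((1 : ℝ) - l) ∂ν = ⊤ := by
      have hpt : ∀ y ∈ {y | f y = 0}, f y ^ ((1 : ℝ) - l) = (⊤ : ℝ≥0∞) := by
        intro y hy
        rw [Set.mem_setOf_eq] at hy
        rw [hy]
        exact ENNReal.zero_rpow_of_neg (by linarith)
      rw [setLIntegral_congr_fun hsm hpt, setLIntegral_const]
      exact ENNReal.top_mul hzero
    have h2 := (setLIntegral_le_lintegral {y | f y = 0} fun y => f y ^ ((1 : ℝ) - l)).trans hmom
    rw [h1] at h2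
    exact (lt_irrefl _ (lt_of_le_of_lt h2 ENNReal.ofReal_lt_top)).elim
  have hae : ∀ᵐ x ∂π, ∀ i, f (x i) ≠ 0 ∧ f (x i) ≠ ∞ := by
    rw [ae_all_iff]
    intro i
    have hν0 : ν {y | ¬(f y ≠ 0 ∧ f y ≠ ∞)} = 0 :=
      ae_iff.1 (hf_ne_zero.and (hf_lt_top.mono fun y hy => hy.ne))
    exact ae_iff.2 (Measure.pi_eval_preimage_null (μ := fun _ : Fin N => ν) (i := i) hν0)
  have hgood : ∀ᵐ x ∂π, g x ≠ 0 ∧ g x ≠ ∞ := by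
    filter_upwards [hae] with x hx
    refine ⟨Finset.prod_ne_zero_iff.2 fun i _ => (hx i).1, ?_⟩
    exact ENNReal.prod_ne_top fun i _ => (hx i).2
  -- change-of-measure identity for the product measure
  have hπμ : (Measure.pi fun _ : Fin N => ν.withDensity f) = π.withDensity g := by
    refine Measure.pi_eq fun s hs => ?_
    rw [withDensity_apply _ (MeasurableSet.univ_pi hs), ← lintegral_indicator
      (MeasurableSet.univ_pi hs)]
    have hind : ∀ x : Fin N → E,
        (Set.univ.pi s).indicator g x = ∏ i, (s i).indicator f (x i) := by
      intro x
      by_cases hx : x ∈ Set.univ.pi s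
      · rw [Set.indicator_of_mem hx]
        exact Finset.prod_congr rfl fun i _ =>
          (Set.indicator_of_mem (hx i (Set.mem_univ i)) f).symm
      · rw [Set.indicator_of_notMem hx]
        rw [Set.mem_univ_pi] at hx
        push_neg at hx
        obtain ⟨i, hi⟩ := hx
        exact (Finset.prod_eq_zero (Finset.mem_univ i) (Set.indicator_of_notMem hi f)).symm
    simp_rw [hind]
    rw [lintegral_pi_prod_aux ν N _ fun i => hf.indicator (hs i)]
    refine Finset.prod_congr rfl fun i _ => ?_
    rw [withDensity_apply _ (hs i), ← lintegral_indicator (hs i)]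
  -- measurability of the Hölder factors
  have hFl1 : Measurable fun x => ENNReal.ofReal (|F x| ^ ((l : ℝ) - 1)) :=
    ENNReal.measurable_ofReal.comp
      ((Real.continuous_rpow_const hlm1.le).measurable.comp hF.abs)
  have hFl : Measurable fun x => ENNReal.ofReal (|F x| ^ (l : ℝ)) :=
    ENNReal.measurable_ofReal.comp
      ((Real.continuous_rpow_const hl0.le).measurable.comp hF.abs)
  have hφm : Measurable fun x => ENNReal.ofReal (|F x| ^ ((l : ℝ) - 1)) * g x ^ a :=
    hFl1.mul (ENNReal.continuous_rpow_const.measurable.comp hgmeas)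
  have hψm : Measurable fun x => g x ^ (-a) :=
    ENNReal.continuous_rpow_const.measurable.comp hgmeas
  -- step 1: insert the density and its inverse
  have hstep : ∫⁻ x, ENNReal.ofReal (|F x| ^ ((l : ℝ) - 1)) ∂π
      = ∫⁻ x, ((fun x => ENNReal.ofReal (|F x| ^ ((l : ℝ) - 1)) * g x ^ a)
          * fun x => g x ^ (-a)) x ∂π := by
    refine lintegral_congr_ae ?_
    filter_upwards [hgood] with x hx
    have h1 : g x ^ a ≠ 0 := by simp [ENNReal.rpow_eq_zero_iff, hx.1, hx.2]
    have h2 : g x ^ a ≠ ∞ := by simp [ENNReal.rpow_eq_top_iff, hx.1, hx.2]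
    simp only [Pi.mul_apply]
    rw [mul_assoc, ENNReal.rpow_neg, ENNReal.mul_inv_cancel h1 h2, mul_one]
  -- Hölder's inequality
  have hHolder := ENNReal.lintegral_mul_le_Lp_mul_Lq π hpq hφm.aemeasurable hψm.aemeasurable
  -- first factor
  have hfac1 : ∫⁻ x, (ENNReal.ofReal (|F x| ^ ((l : ℝ) - 1)) * g x ^ a) ^ p ∂π
      = ∫⁻ x, ENNReal.ofReal (|F x| ^ (l : ℝ))
          ∂(Measure.pi fun _ : Fin N => ν.withDensity f) := by
    have hpt : ∀ x, (ENNReal.ofReal (|F x| ^ ((l : ℝ) - 1)) * g x ^ a) ^ p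
        = ENNReal.ofReal (|F x| ^ (l : ℝ)) * g x := by
      intro x
      rw [ENNReal.mul_rpow_of_nonneg _ _ hppos.le]
      congr 1
      · rw [ENNReal.ofReal_rpow_of_nonneg (Real.rpow_nonneg (abs_nonneg _) _) hppos.le,
          ← Real.rpow_mul (abs_nonneg _)]
        congr 2
        rw [hpdef]; field_simp
      · rw [← ENNReal.rpow_mul, show a * p = 1 by rw [hadef, hpdef]; field_simp,
          ENNReal.rpow_one]
    simp_rw [hpt]
    rw [hπμ, lintegral_withDensity_eq_lintegral_mul π hgmeas hFl]
    refine lintegral_congr fun x => ?_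
    simp [mul_comm]
  -- second factor
  have hfac2 : ∫⁻ x, (g x ^ (-a)) ^ (l : ℝ) ∂π ≤ ENNReal.ofReal (Real.exp C) := by
    have hpt : ∀ᵐ x ∂π, (g x ^ (-a)) ^ (l : ℝ) = ∏ i, f (x i) ^ ((1 : ℝ) - l) := by
      filter_upwards [hae] with x hx
      rw [← ENNReal.rpow_mul, show -a * l = (1 : ℝ) - l by rw [hadef]; field_simp; ring,
        hgdef]
      exact prod_rpow_of_ne_zero_aux _ _ (fun i _ => (hx i).1) _
    rw [lintegral_congr_ae hpt,
      lintegral_pi_prod_aux ν N (fun _ y => f y ^ ((1 : ℝ) - l))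
        (fun _ => ENNReal.continuous_rpow_const.measurable.comp hf),
      Finset.prod_const, Finset.card_univ, Fintype.card_fin]
    calc (∫⁻ y, f y ^ ((1 : ℝ) - l) ∂ν) ^ N
        ≤ ENNReal.ofReal (1 + C / N) ^ N := pow_le_pow_left' hmom N
      _ ≤ ENNReal.ofReal (Real.exp (C / N)) ^ N := by
          refine pow_le_pow_left' (ENNReal.ofReal_le_ofReal ?_) N
          have := Real.add_one_le_exp (C / N)
          linarith
      _ = ENNReal.ofReal (Real.exp (C / N) ^ N) := by
          rw [ENNReal.ofReal_pow (Real.exp_nonneg _)]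
      _ = ENNReal.ofReal (Real.exp C) := by
          congr 1
          rw [← Real.rpow_natCast, ← Real.exp_mul]
          congr 1
          field_simp
  -- put everything together
  rw [hstep]
  refine hHolder.trans ?_
  rw [hfac1]
  have h1p : 1 / p = ((l : ℝ) - 1) / l := by rw [hpdef, one_div_div]
  rw [h1p]
  rw [mul_comm (ENNReal.ofReal (Real.exp (C / l)))]
  refine mul_le_mul' le_rfl ?_
  calc (∫⁻ x, (g x ^ (-a)) ^ (l : ℝ) ∂π) ^ (1 / (l : ℝ))
      ≤ ENNReal.ofReal (Real.exp C) ^ (1 / (l : ℝ)) :=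
        ENNReal.rpow_le_rpow hfac2 (by positivity)
    _ = ENNReal.ofReal (Real.exp C ^ (1 / (l : ℝ))) :=
        ENNReal.ofReal_rpow_of_pos (Real.exp_pos C)
    _ = ENNReal.ofReal (Real.exp (C / l)) := by
        rw [← Real.exp_mul]
        congr 1
        field_simp
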